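/- arXiv:0803.2803 — 2 statements merged into one kernel-verified Lean document; each statement's English description precedes it below -/
import Mathlib

section
/- Let (F_n) be the Fibonacci numbers. For every integer n ≥ 1, F_n = Σ_{k∈ℤ} (−1)^k · C(n, ⌊(n−1−5k)/2⌋), where the sum runs over all integers k (only finitely many terms are nonzero). -/
/-- Binomial coefficient `C(m, j)` with integer lower index `j`,
equal to `0` when `j < 0` or `j > m`. -/
def ichoose (m : ℕ) (j : ℤ) : ℚ :=
  if j < 0 then 0 else (m.choose j.toNat : ℚ)

lemma ichoose_eq_zero_of_neg {m : ℕ} {j : ℤ} (h : j < 0) : ichoose m j = 0 := by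
  simp [ichoose, h]

lemma ichoose_eq_zero_of_lt {m : ℕ} {j : ℤ} (h : (m : ℤ) < j) : ichoose m j = 0 := by
  have h0 : ¬ j < 0 := by omega
  have : m < j.toNat := by omega
  simp [ichoose, h0, Nat.choose_eq_zero_of_lt this]

lemma ichoose_pascal (m : ℕ) (j : ℤ) :
    ichoose (m + 1) j = ichoose m j + ichoose m (j - 1) := by
  rcases lt_trichotomy j 0 with h | h | h
  · rw [ichoose_eq_zero_of_neg h, ichoose_eq_zero_of_neg h,
      ichoose_eq_zero_of_neg (by omega : j - 1 < 0)]
    ring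
  · subst h
    simp [ichoose, ichoose_eq_zero_of_neg (by norm_num : (0:ℤ) - 1 < 0)]
  · have h0 : ¬ j < 0 := by omega
    have h1 : ¬ j - 1 < 0 := by omega
    have ht : j.toNat = (j - 1).toNat + 1 := by omega
    simp only [ichoose, h0, h1, if_false, ht, Nat.choose_succ_succ]
    push_cast
    ring

lemma ichoose_symm (m : ℕ) (j : ℤ) : ichoose m j = ichoose m ((m : ℤ) - j) := by
  rcases lt_or_ge j 0 with h | h
  · rw [ichoose_eq_zero_of_neg h, ichoose_eq_zero_of_lt (by omega : (m:ℤ) < (m:ℤ) - j)]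
  · rcases le_or_gt j m with h2 | h2
    · have h0 : ¬ j < 0 := by omega
      have h1 : ¬ (m:ℤ) - j < 0 := by omega
      have ht : ((m:ℤ) - j).toNat = m - j.toNat := by omega
      have hle : j.toNat ≤ m := by omega
      simp only [ichoose, h0, h1, if_false, ht]
      rw [Nat.choose_symm hle]
    · rw [ichoose_eq_zero_of_lt h2, ichoose_eq_zero_of_neg (by omega : (m:ℤ) - j < 0)]

lemma negone_zpow_neg (k : ℤ) : (-1 : ℚ) ^ (-k) = (-1 : ℚ) ^ k := by
  rcases Int.even_or_odd k with h | h
  · rw [h.neg.neg_one_zpow, h.neg_one_zpow]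
  · rw [h.neg.neg_one_zpow, h.neg_one_zpow]

/-- The summand. -/
noncomputable def Sfun (c : ℤ) (m : ℕ) (k : ℤ) : ℚ :=
  (-1 : ℚ) ^ k * ichoose m (((m : ℤ) + c - 5 * k) / 2)

/-- The parametrized sum. -/
noncomputable def Ssum (c : ℤ) (m : ℕ) : ℚ := ∑ᶠ k : ℤ, Sfun c m k

lemma Sfun_support (c : ℤ) (m : ℕ) :
    Function.support (Sfun c m) ⊆
      ↑(Finset.Icc (-(m : ℤ) - c.natAbs - 1) ((m : ℤ) + c.natAbs + 1)) := by
  intro k hk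
  simp only [Function.mem_support, Sfun] at hk
  have hne : ichoose m (((m : ℤ) + c - 5 * k) / 2) ≠ 0 := by
    intro h; rw [h, mul_zero] at hk; exact hk rfl
  have h1 : ¬ (((m : ℤ) + c - 5 * k) / 2 < 0) := fun h => hne (ichoose_eq_zero_of_neg h)
  have h2 : ¬ ((m : ℤ) < ((m : ℤ) + c - 5 * k) / 2) := fun h => hne (ichoose_eq_zero_of_lt h)
  simp only [Finset.coe_Icc, Set.mem_Icc]
  have hc : (c.natAbs : ℤ) = |c| := Int.abs_eq_natAbs c ▸ rfl
  rw [hc]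
  have := abs_nonneg c
  have h3 := abs_le.mp (le_refl |c|)
  omega

lemma Sfun_support_finite (c : ℤ) (m : ℕ) : (Function.support (Sfun c m)).Finite :=
  Set.Finite.subset (Finset.Icc _ _).finite_toSet (Sfun_support c m)

lemma Ssum_succ (c : ℤ) (m : ℕ) : Ssum c (m + 1) = Ssum (c + 1) m + Ssum (c - 1) m := by
  rw [Ssum, Ssum, Ssum, ← finsum_add_distrib (Sfun_support_finite _ _) (Sfun_support_finite _ _)]
  apply finsum_congr
  intro k
  simp only [Pi.add_apply, Sfun]
  push_cast
  rw [show ((m : ℤ) + 1 + c - 5 * k) = ((m : ℤ) + (c + 1) - 5 * k) by ring, ichoose_pascal]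
  rw [show ((m : ℤ) + (c + 1) - 5 * k) / 2 - 1 = ((m : ℤ) + (c - 1) - 5 * k) / 2 by omega]
  ring

lemma Ssum_one (m : ℕ) : Ssum 1 m = Ssum 0 m := by
  rw [Ssum, Ssum]
  apply finsum_eq_of_bijective (fun k : ℤ => -k) neg_involutive.bijective
  intro k
  simp only [Sfun]
  rw [negone_zpow_neg, ichoose_symm m (((m : ℤ) + 1 - 5 * k) / 2),
    show (m : ℤ) - ((m : ℤ) + 1 - 5 * k) / 2 = ((m : ℤ) + 0 - 5 * (-k)) / 2 by omega]

lemma Ssum_neg_two (m : ℕ) : Ssum (-2) m = 0 := by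
  have key : Ssum (-2) m = -Ssum (-2) m := by
    conv_lhs => rw [Ssum]
    rw [show -Ssum (-2) m = ∑ᶠ k : ℤ, -Sfun (-2) m k by rw [finsum_neg_distrib]; rfl]
    have hinv : Function.Involutive (fun k : ℤ => -1 - k) := fun k => by ring
    apply finsum_eq_of_bijective (fun k : ℤ => -1 - k) hinv.bijective
    intro k
    simp only [Sfun]
    have hs : (-1 : ℚ) ^ (-1 - k) = -(-1 : ℚ) ^ k := by
      rw [show (-1 : ℤ) - k = -(1 + k) by ring, negone_zpow_neg,
        zpow_add₀ (by norm_num : (-1 : ℚ) ≠ 0)]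
      norm_num
    rw [hs, ichoose_symm m (((m : ℤ) + -2 - 5 * k) / 2),
      show (m : ℤ) - ((m : ℤ) + -2 - 5 * k) / 2 = ((m : ℤ) + -2 - 5 * (-1 - k)) / 2 by omega]
    ring
  linarith

lemma Ssum_zero_zero : Ssum 0 0 = 1 := by
  rw [Ssum, finsum_eq_single _ (0 : ℤ)]
  · simp [Sfun, ichoose]
  · intro k hk
    have : (((0:ℕ) : ℤ) + 0 - 5 * k) / 2 < 0 ∨ ((0:ℕ) : ℤ) < (((0:ℕ) : ℤ) + 0 - 5 * k) / 2 := by omega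
    rcases this with h | h
    · simp only [Sfun]; rw [ichoose_eq_zero_of_neg h, mul_zero]
    · simp only [Sfun]; rw [ichoose_eq_zero_of_lt h, mul_zero]

lemma Ssum_zero_one : Ssum 0 1 = 1 := by
  rw [Ssum, finsum_eq_single _ (0 : ℤ)]
  · simp [Sfun, ichoose]
  · intro k hk
    have : (((1:ℕ) : ℤ) + 0 - 5 * k) / 2 < 0 ∨ ((1:ℕ) : ℤ) < (((1:ℕ) : ℤ) + 0 - 5 * k) / 2 := by omega
    rcases this with h | h
    · simp only [Sfun]; rw [ichoose_eq_zero_of_neg h, mul_zero]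
    · simp only [Sfun]; rw [ichoose_eq_zero_of_lt h, mul_zero]

lemma Ssum_fib (m : ℕ) : Ssum 0 m = Nat.fib (m + 1) := by
  induction m using Nat.twoStepInduction with
  | zero => simpa using Ssum_zero_zero
  | one => simpa using Ssum_zero_one
  | more m ih1 ih2 =>
    rw [Ssum_succ, show (0 : ℤ) + 1 = 1 by ring, show (0 : ℤ) - 1 = -1 by ring,
      Ssum_one, ih2, Ssum_succ (-1) m,
      show (-1 : ℤ) + 1 = 0 by ring, show (-1 : ℤ) - 1 = -2 by ring, Ssum_neg_two,
      ih1]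
    have h : Nat.fib (m + 2 + 1) = Nat.fib (m + 1) + Nat.fib (m + 1 + 1) := Nat.fib_add_two
    rw [h]
    push_cast
    ring

/-- Andrews' identity: for `n ≥ 1`,
`F_n = Σ_{k∈ℤ} (−1)^k · C(n, ⌊(n−1−5k)/2⌋)`. -/
theorem fib_eq_finsum_choose_floor' (n : ℕ) (hn : 1 ≤ n) :
    (Nat.fib n : ℚ) =
      ∑ᶠ k : ℤ, (-1 : ℚ) ^ k * ichoose n ⌊((n : ℚ) - 1 - 5 * (k : ℚ)) / 2⌋ := by
  obtain ⟨m, rfl⟩ : ∃ m, n = m + 1 := ⟨n - 1, by omega⟩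
  have hS : (∑ᶠ k : ℤ, (-1 : ℚ) ^ k * ichoose (m + 1) ⌊(((m + 1 : ℕ) : ℚ) - 1 - 5 * (k : ℚ)) / 2⌋)
      = Ssum (-1) (m + 1) := by
    apply finsum_congr
    intro k
    have hcast : (((m + 1 : ℕ) : ℚ) - 1 - 5 * (k : ℚ)) / 2
        = ((((m + 1 : ℕ) : ℤ) + (-1) - 5 * k : ℤ) : ℚ) / ((2 : ℕ) : ℚ) := by
      push_cast; ring
    rw [Sfun, hcast, Rat.floor_intCast_div_natCast]
    norm_num
  rw [hS, Ssum_succ, show (-1 : ℤ) + 1 = 0 by ring, show (-1 : ℤ) - 1 = -2 by ring,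
    Ssum_neg_two, Ssum_fib, add_zero]
end

section
/- Fix an integer p ≥ 1. For an integer x ≥ 1 define the formal power series over ℚ: 𝒞(p, x; t) = Σ_{n≥0} [ 2x/((2p−1)n + 2x) ]·C(2pn + 2x − 1, n)·t^n, and for an integer y ≥ 0 define 𝒟(p, y; t) = Σ_{n≥0} [ ((p−1)n + y + 1)/(pn + y + 1) ]·C(2(pn + y + 1), n)·t^n. Then for all integers x ≥ 1 and y ≥ 0, 𝒞(p, x; t) · 𝒟(p, y; t) = 𝒟(p, x + y; t) as formal power series over ℚ. -/
/-- The formal power series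
`𝒞(p, x; t) = Σ_{n≥0} (2x/((2p−1)n+2x))·C(2pn+2x−1, n)·t^n` over `ℚ`. -/
noncomputable def seriesC (p x : ℕ) : PowerSeries ℚ :=
  PowerSeries.mk fun n =>
    ((2 * (x : ℚ)) / ((2 * (p : ℚ) - 1) * n + 2 * x)) * ((2 * p * n + 2 * x - 1).choose n : ℚ)

/-- The formal power series
`𝒟(p, y; t) = Σ_{n≥0} (((p−1)n+y+1)/(pn+y+1))·C(2(pn+y+1), n)·t^n` over `ℚ`. -/
noncomputable def seriesD (p y : ℕ) : PowerSeries ℚ :=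
  PowerSeries.mk fun n =>
    ((((p : ℚ) - 1) * n + y + 1) / ((p : ℚ) * n + y + 1)) * ((2 * (p * n + y + 1)).choose n : ℚ)

/-- Integer form of the Fuss–Catalan coefficient `a/(a+zk)·C(zk+a, k)`. -/
private def AA (z a : ℕ) : ℕ → ℤ
  | 0 => 1
  | (j+1) => ((z*(j+1) + a).choose (j+1) : ℤ) - z * ((z*(j+1) + a - 1).choose j)

private lemma AA_zero_right (z a : ℕ) : AA z a 0 = 1 := rfl

private lemma AA_zero (z : ℕ) (hz : 1 ≤ z) (k : ℕ) (hk : k ≠ 0) : AA z 0 k = 0 := by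
  obtain ⟨j, rfl⟩ : ∃ j, k = j + 1 := ⟨k - 1, by omega⟩
  have h := Nat.add_one_mul_choose_eq (z*(j+1) - 1) j
  have hpos : 1 ≤ z*(j+1) := Nat.one_le_iff_ne_zero.mpr (by positivity)
  have h1 : z*(j+1) - 1 + 1 = z*(j+1) := by omega
  rw [h1] at h
  -- h : z*(j+1) * (z*(j+1)-1).choose j = (z*(j+1)).choose (j+1) * (j+1)
  show ((z*(j+1) + 0).choose (j+1) : ℤ) - z * ((z*(j+1) + 0 - 1).choose j) = 0
  have hc : (z*(j+1)).choose (j+1) = z * (z*(j+1)-1).choose j := by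
    apply Nat.eq_of_mul_eq_mul_right (show 0 < j+1 by omega)
    rw [← h]; ring
  simp only [Nat.add_zero]
  rw [hc]
  push_cast
  ring

private lemma AA_rec (z : ℕ) (hz : 1 ≤ z) (a k : ℕ) :
    AA z (a+1) (k+1) = AA z a (k+1) + AA z (a+z) k := by
  cases k with
  | zero =>
    show ((z*1 + (a+1)).choose 1 : ℤ) - z * ((z*1 + (a+1) - 1).choose 0)
        = (((z*1 + a).choose 1 : ℤ) - z * ((z*1 + a - 1).choose 0)) + 1
    rw [Nat.choose_one_right, Nat.choose_one_right, Nat.choose_zero_right, Nat.choose_zero_right]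
    push_cast
    ring
  | succ j =>
    show ((z*(j+2) + (a+1)).choose (j+2) : ℤ) - z * ((z*(j+2) + (a+1) - 1).choose (j+1))
        = (((z*(j+2) + a).choose (j+2) : ℤ) - z * ((z*(j+2) + a - 1).choose (j+1)))
        + (((z*(j+1) + (a+z)).choose (j+1) : ℤ) - z * ((z*(j+1) + (a+z) - 1).choose j))
    have e3 : z*(j+1) + (a+z) = z*(j+2) + a := by
      have : z*(j+2) = z*(j+1) + z := by ring
      omega
    have e2 : z*(j+2) + (a+1) - 1 = z*(j+2) + a := by omega
    have e4 : z*(j+1) + (a+z) - 1 = z*(j+2) + a - 1 := by omega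
    have e1 : z*(j+2) + (a+1) = (z*(j+2) + a) + 1 := by omega
    rw [e2, e4, e1, e3]
    have hpos : 1 ≤ z*(j+2) := Nat.one_le_iff_ne_zero.mpr (by positivity)
    have e5 : z*(j+2) + a = (z*(j+2) + a - 1) + 1 := by omega
    have p1 : ((z*(j+2) + a) + 1).choose (j+2)
        = (z*(j+2)+a).choose (j+1) + (z*(j+2)+a).choose (j+2) :=
      Nat.choose_succ_succ _ _
    have p2 : (z*(j+2) + a).choose (j+1)
        = (z*(j+2)+a-1).choose j + (z*(j+2)+a-1).choose (j+1) := by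
      conv_lhs => rw [e5]
      exact Nat.choose_succ_succ _ _
    rw [p1, p2]
    push_cast
    ring

private lemma rothe (z : ℕ) (hz : 1 ≤ z) :
    ∀ n a b, (∑ k ∈ Finset.range (n+1),
        AA z a k * ((z*(n-k)+b).choose (n-k) : ℤ)) = ((z*n + a + b).choose n : ℤ) := by
  intro n
  induction n with
  | zero => intro a b; simp [AA]
  | succ m ih =>
    intro a
    induction a with
    | zero =>
      intro b
      rw [Finset.sum_eq_single 0]
      · simp [AA_zero_right]
      · intro k _ hk
        rw [AA_zero z hz k hk]; ring
      · intro h; simp at h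
    | succ a iha =>
      intro b
      rw [Finset.sum_range_succ']
      simp only [Nat.add_sub_add_right, Nat.sub_zero]
      have hsplit : ∀ j ∈ Finset.range (m+1),
          AA z (a+1) (j+1) * ((z*(m-j)+b).choose (m-j) : ℤ)
          = AA z a (j+1) * ((z*(m-j)+b).choose (m-j) : ℤ)
            + AA z (a+z) j * ((z*(m-j)+b).choose (m-j) : ℤ) := by
        intro j _
        rw [AA_rec z hz a j]; ring
      rw [Finset.sum_congr rfl hsplit, Finset.sum_add_distrib]
      have h2 : (∑ j ∈ Finset.range (m+1), AA z (a+z) j * ((z*(m-j)+b).choose (m-j) : ℤ))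
          = ((z*m + (a+z) + b).choose m : ℤ) := ih (a+z) b
      have h1 := iha b
      rw [Finset.sum_range_succ'] at h1
      simp only [Nat.add_sub_add_right, Nat.sub_zero] at h1
      rw [AA_zero_right] at h1
      rw [AA_zero_right, h2]
      have hp : (z*(m+1) + (a+1) + b) = (z*(m+1) + a + b) + 1 := by ring
      have hq : z*m + (a+z) + b = z*(m+1) + a + b := by ring
      rw [hp, hq, Nat.choose_succ_succ (z*(m+1)+a+b) m]
      push_cast
      linarith [h1]

/-- Integer form of the `𝒟` coefficients. -/
private def DD (p y n : ℕ) : ℤ :=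
  ((2*p*n + (2*y + 1)).choose n : ℤ)
    - if n = 0 then (0:ℤ) else (((2*p*n + (2*y + 1)).choose (n-1) : ℕ) : ℤ)

private lemma key (p : ℕ) (hp : 1 ≤ p) (n x y : ℕ) :
    (∑ k ∈ Finset.range (n+1), AA (2*p) (2*x) k * DD p y (n-k)) = DD p (x+y) n := by
  have hz : 1 ≤ 2*p := by omega
  have hsplit : ∀ k ∈ Finset.range (n+1),
      AA (2*p) (2*x) k * DD p y (n-k)
      = AA (2*p) (2*x) k * ((2*p*(n-k) + (2*y + 1)).choose (n-k) : ℤ)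
        - AA (2*p) (2*x) k *
          (if n-k = 0 then 0 else ((2*p*(n-k) + (2*y + 1)).choose (n-k-1) : ℤ)) := by
    intro k _
    unfold DD; ring
  rw [Finset.sum_congr rfl hsplit, Finset.sum_sub_distrib]
  have hfst : (∑ k ∈ Finset.range (n+1),
      AA (2*p) (2*x) k * ((2*p*(n-k) + (2*y + 1)).choose (n-k) : ℤ))
      = ((2*p*n + (2*(x+y) + 1)).choose n : ℤ) := by
    rw [rothe (2*p) hz n (2*x) (2*y+1)]
    congr 2
    ring
  rw [hfst]
  have hsnd : (∑ k ∈ Finset.range (n+1), AA (2*p) (2*x) k *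
      (if n-k = 0 then 0 else ((2*p*(n-k) + (2*y + 1)).choose (n-k-1) : ℤ)))
      = if n = 0 then 0 else ((2*p*n + (2*(x+y) + 1)).choose (n-1) : ℤ) := by
    cases n with
    | zero => simp
    | succ m =>
      rw [Finset.sum_range_succ]
      have hz0 : AA (2*p) (2*x) (m+1) *
          (if m+1-(m+1) = 0 then (0:ℤ)
            else ((2*p*(m+1-(m+1)) + (2*y + 1)).choose (m+1-(m+1)-1) : ℤ)) = 0 := by
        simp
      rw [hz0, add_zero]
      have hcong : ∀ k ∈ Finset.range (m+1),
          AA (2*p) (2*x) k *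
            (if m+1-k = 0 then 0 else ((2*p*(m+1-k) + (2*y + 1)).choose (m+1-k-1) : ℤ))
          = AA (2*p) (2*x) k * ((2*p*(m-k) + (2*y+1+2*p)).choose (m-k) : ℤ) := by
        intro k hk
        rw [Finset.mem_range] at hk
        rw [if_neg (by omega)]
        have e0 : m + 1 - k = (m - k) + 1 := by omega
        have e1 : 2*p*(m+1-k) + (2*y + 1) = 2*p*(m-k) + (2*y+1+2*p) := by
          rw [e0]; ring
        have e2 : m+1-k-1 = m-k := by omega
        rw [e1, e2]
      rw [Finset.sum_congr rfl hcong, rothe (2*p) hz m (2*x) (2*y+1+2*p)]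
      rw [if_neg (Nat.succ_ne_zero m)]
      have e3 : 2*p*m + 2*x + (2*y+1+2*p) = 2*p*(m+1) + (2*(x+y)+1) := by ring
      have e4 : m + 1 - 1 = m := rfl
      rw [e3, e4]
  rw [hsnd]
  unfold DD
  rfl

private lemma coeffC (p x : ℕ) (hp : 1 ≤ p) (hx : 1 ≤ x) (n : ℕ) :
    (PowerSeries.coeff n) (seriesC p x) = ((AA (2*p) (2*x) n : ℤ) : ℚ) := by
  rw [seriesC, PowerSeries.coeff_mk]
  cases n with
  | zero =>
    have h2x : (2 * (x:ℚ)) ≠ 0 := by positivity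
    simp [AA_zero_right, h2x]
  | succ j =>
    show (2 * (x : ℚ)) / ((2 * (p : ℚ) - 1) * (↑(j+1)) + 2 * x)
          * ((2*p*(j+1) + 2*x - 1).choose (j+1) : ℚ)
      = ((((2*p*(j+1) + 2*x).choose (j+1) : ℤ)
          - (2*p) * ((2*p*(j+1) + 2*x - 1).choose j) : ℤ) : ℚ)
    have hA : j + 1 ≤ 2*p*(j+1) :=
      le_trans (by omega) (Nat.mul_le_mul_right (j+1) (by omega : 1 ≤ 2*p))
    set M := 2*p*(j+1) + 2*x with hM
    have hM2 : 2 ≤ M := by omega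
    have hM1 : M - 1 + 1 = M := by omega
    have hpas : M.choose (j+1) = (M-1).choose j + (M-1).choose (j+1) := by
      conv_lhs => rw [← hM1]
      exact Nat.choose_succ_succ _ _
    have hr : (M-1).choose (j+1) * (j+1) = (M-1).choose j * ((M-1) - j) :=
      Nat.choose_succ_right_eq (M-1) j
    have hMj : (M-1) - j = (2*p-1)*(j+1) + 2*x := by
      have h1 : (2*p-1)*(j+1) = 2*p*(j+1) - (j+1) := by
        rw [Nat.sub_mul, one_mul]
      rw [h1]
      omega
    rw [hMj] at hr
    have hdnz : (((2*p-1)*(j+1) + 2*x : ℕ) : ℚ) ≠ 0 :=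
      Nat.cast_ne_zero.mpr (by omega)
    have hden : ((2 * (p : ℚ) - 1) * (↑(j+1)) + 2 * x) = (((2*p-1)*(j+1) + 2*x : ℕ) : ℚ) := by
      push_cast [Nat.cast_sub (by omega : 1 ≤ 2*p)]
      ring
    rw [hden]
    have hpasQ : ((M.choose (j+1) : ℕ) : ℚ)
        = ((M-1).choose j : ℚ) + ((M-1).choose (j+1) : ℚ) := by
      exact_mod_cast congrArg (Nat.cast (R := ℚ)) hpas
    have hrQ : ((M-1).choose (j+1) : ℚ) * ((j:ℚ)+1)
        = ((M-1).choose j : ℚ) * (((2*p-1)*(j+1) + 2*x : ℕ) : ℚ) := by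
      exact_mod_cast congrArg (Nat.cast (R := ℚ)) hr
    rw [div_mul_eq_mul_div, div_eq_iff hdnz]
    push_cast [Nat.cast_sub (show 1 ≤ 2*p by omega)] at hpasQ hrQ ⊢
    linear_combination (-((2*(p:ℚ)-1)*((j:ℚ)+1) + 2*(x:ℚ))) * hpasQ + (1-2*(p:ℚ)) * hrQ

private lemma coeffD (p y : ℕ) (hp : 1 ≤ p) (n : ℕ) :
    (PowerSeries.coeff n) (seriesD p y) = ((DD p y n : ℤ) : ℚ) := by
  rw [seriesD, PowerSeries.coeff_mk]
  cases n with
  | zero =>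
    have h : ((y:ℚ) + 1) ≠ 0 := by positivity
    simp [DD, h]
  | succ j =>
    show (((p : ℚ) - 1) * (↑(j+1)) + y + 1) / ((p : ℚ) * (↑(j+1)) + y + 1)
          * ((2 * (p*(j+1) + y + 1)).choose (j+1) : ℚ)
      = ((((2*p*(j+1) + (2*y + 1)).choose (j+1) : ℤ)
          - ((2*p*(j+1) + (2*y + 1)).choose j) : ℤ) : ℚ)
    set M := 2 * (p*(j+1) + y + 1) with hM
    have hM2 : M = (2*p*(j+1) + (2*y + 1)) + 1 := by
      rw [hM]; ring
    have hpas : M.choose (j+1)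
        = (2*p*(j+1)+(2*y+1)).choose j + (2*p*(j+1)+(2*y+1)).choose (j+1) := by
      rw [hM2]; exact Nat.choose_succ_succ _ _
    have hsm := Nat.add_one_mul_choose_eq (2*p*(j+1)+(2*y+1)) j
    rw [← hM2] at hsm
    -- hsm : M * (...).choose j = M.choose (j+1) * (j+1)
    have hden : ((p : ℚ) * (↑(j+1)) + y + 1) ≠ 0 := by positivity
    have hpasQ : (M.choose (j+1) : ℚ)
        = ((2*p*(j+1)+(2*y+1)).choose j : ℚ) + ((2*p*(j+1)+(2*y+1)).choose (j+1) : ℚ) := by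
      exact_mod_cast congrArg (Nat.cast (R := ℚ)) hpas
    have hsmQ : (M : ℚ) * ((2*p*(j+1)+(2*y+1)).choose j : ℚ)
        = (M.choose (j+1) : ℚ) * ((j:ℚ)+1) := by
      exact_mod_cast congrArg (Nat.cast (R := ℚ)) hsm
    have hMQ : (M : ℚ) = 2 * ((p:ℚ) * ((j:ℚ)+1) + y + 1) := by
      rw [hM]; push_cast; ring
    rw [div_mul_eq_mul_div, div_eq_iff hden]
    rw [hMQ] at hsmQ
    push_cast at hpasQ hsmQ ⊢
    nlinarith [hpasQ, hsmQ]

/-- For integers `p ≥ 1`, `x ≥ 1`, `y ≥ 0`: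
`𝒞(p, x; t) · 𝒟(p, y; t) = 𝒟(p, x+y; t)`. -/
theorem seriesC_mul_seriesD (p : ℕ) (hp : 1 ≤ p) (x y : ℕ) (hx : 1 ≤ x) :
    seriesC p x * seriesD p y = seriesD p (x + y) := by
  ext n
  rw [PowerSeries.coeff_mul, Finset.Nat.sum_antidiagonal_eq_sum_range_succ_mk]
  have hterm : ∀ k ∈ Finset.range (n+1),
      (PowerSeries.coeff k) (seriesC p x) * (PowerSeries.coeff (n-k)) (seriesD p y)
      = ((AA (2*p) (2*x) k * DD p y (n-k) : ℤ) : ℚ) := by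
    intro k _
    rw [coeffC p x hp hx k, coeffD p y hp (n-k)]
    push_cast; ring
  rw [Finset.sum_congr rfl hterm, ← Int.cast_sum, key p hp n x y, coeffD p (x+y) hp n]
end
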